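/- If A and B are acyclic TFSs and A strictly subsumes B, then rank(A) < rank(B), where rank(C) = |Π(C)| + Θ(C) + Δ(C), with Θ(C) = Σ_{π∈Π(C)} r(θ(δ_C(q̄_C,π))) and Δ(C) = |Π(C)| − |Q_C|. -/

import Mathlib

/-! Typed feature structures (TFSs), following Carpenter 1992.
`pathδ` extends the partial transition function `δ` to paths (lists of features). -/

variable {Nodes Feats Types : Type}

def pathδ (δ : Nodes → Feats → Option Nodes) : Nodes → List Feats → Option Nodes
  | q, [] => some q
  | q, f :: π => (δ q f).bind fun q' => pathδ δ q' π

/-- A typed feature structure: a finite set of nodes `Q`, a root, and a partial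
transition function `δ : Q × Feats ⇀ Q` (modelled as `none` outside its domain,
undefined outside `Q`), with every node reachable from the root. -/
structure TFS (Nodes Feats : Type) where
  Q : Finset Nodes
  root : Nodes
  root_mem : root ∈ Q
  δ : Nodes → Feats → Option Nodes
  dom : ∀ q f, (δ q f).isSome → q ∈ Q
  closed : ∀ q f q', δ q f = some q' → q' ∈ Q
  reach : ∀ q ∈ Q, ∃ π : List Feats, pathδ δ root π = some q

/-- The set of paths defined from the root of `A`. -/
def TFS.Pi (A : TFS Nodes Feats) : Set (List Feats) :=
  {π | (pathδ A.δ A.root π).isSome}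

/-- `A` is cyclic if some node returns to itself along a nonempty path. -/
def TFS.Cyclic (A : TFS Nodes Feats) : Prop :=
  ∃ q ∈ A.Q, ∃ α : List Feats, α ≠ [] ∧ pathδ A.δ q α = some q

def TFS.Acyclic (A : TFS Nodes Feats) : Prop := ¬ A.Cyclic

/-- A subsumption morphism from `A` to `B` w.r.t. the typing function `θ`:
maps root to root, maps `Q_A` into `Q_B`, is monotone on node types,
and commutes with the transition function. -/
def IsMorphism [PartialOrder Types] (θ : Nodes → Types)
    (A B : TFS Nodes Feats) (h : Nodes → Nodes) : Prop :=
  h A.root = B.root ∧ (∀ q ∈ A.Q, h q ∈ B.Q) ∧ (∀ q ∈ A.Q, θ q ≤ θ (h q)) ∧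
  ∀ q f q', A.δ q f = some q' → B.δ (h q) f = some (h q')

/-- `A` subsumes `B` iff some subsumption morphism from `A` to `B` exists. -/
def Subsumes [PartialOrder Types] (θ : Nodes → Types) (A B : TFS Nodes Feats) : Prop :=
  ∃ h, IsMorphism θ A B h

/-- Strict subsumption: `A ⊏ B` iff `A ⊑ B` and not `B ⊑ A`. -/
def StrictlySubsumes [PartialOrder Types] (θ : Nodes → Types) (A B : TFS Nodes Feats) : Prop :=
  Subsumes θ A B ∧ ¬ Subsumes θ B A

/-- `Θ(A)`: the sum over paths of the `r`-rank of the type of the node reached. -/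
noncomputable def Theta (r : Types → ℕ) (θ : Nodes → Types) (A : TFS Nodes Feats) : ℕ :=
  ∑ᶠ π ∈ A.Pi, (pathδ A.δ A.root π).elim 0 fun q => r (θ q)

/-- `rank(A) = |Π(A)| + Θ(A) + Δ(A)` where `Δ(A) = |Π(A)| − |Q_A|` (computed in `ℤ`). -/
noncomputable def rank (r : Types → ℕ) (θ : Nodes → Types) (A : TFS Nodes Feats) : ℤ :=
  (A.Pi.ncard : ℤ) + (Theta r θ A : ℤ) + ((A.Pi.ncard : ℤ) - (A.Q.card : ℤ))

section Aux

variable {Nodes Feats Types : Type}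

lemma pathδ_append (δ : Nodes → Feats → Option Nodes) (q : Nodes) (l₁ l₂ : List Feats) :
    pathδ δ q (l₁ ++ l₂) = (pathδ δ q l₁).bind fun q' => pathδ δ q' l₂ := by
  induction l₁ generalizing q with
  | nil => simp [pathδ]
  | cons f l ih =>
    simp only [List.cons_append, pathδ]
    cases δ q f <;> simp [ih]

lemma TFS.mem_of_pathδ (A : TFS Nodes Feats) {q q' : Nodes} {π : List Feats}
    (hq : q ∈ A.Q) (h : pathδ A.δ q π = some q') : q' ∈ A.Q := by
  induction π generalizing q with
  | nil => simp [pathδ] at h; exact h ▸ hq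
  | cons f l ih =>
    simp only [pathδ] at h
    obtain ⟨q'', hq'', hrest⟩ := Option.bind_eq_some_iff.mp h
    exact ih (A.closed q f q'' hq'') hrest

lemma pathδ_morphism [PartialOrder Types] {θ : Nodes → Types} {A B : TFS Nodes Feats}
    {h : Nodes → Nodes} (hm : IsMorphism θ A B h) {q q' : Nodes} {π : List Feats}
    (hp : pathδ A.δ q π = some q') : pathδ B.δ (h q) π = some (h q') := by
  induction π generalizing q with
  | nil => simp [pathδ] at hp ⊢; exact congrArg h hp
  | cons f l ih =>
    simp only [pathδ] at hp ⊢
    obtain ⟨q'', hq'', hrest⟩ := Option.bind_eq_some_iff.mp hp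
    rw [hm.2.2.2 q f q'' hq'']
    exact ih hrest

lemma TFS.pi_finite [Finite Feats] (A : TFS Nodes Feats) (hA : A.Acyclic) : A.Pi.Finite := by
  apply (List.finite_length_le Feats A.Q.card).subset
  intro π hπ
  simp only [Set.mem_setOf_eq]
  by_contra hlen
  push_neg at hlen
  obtain ⟨q, hq⟩ := Option.isSome_iff_exists.mp hπ
  -- every prefix is defined
  have hpre : ∀ i ≤ π.length, ∃ qi, pathδ A.δ A.root (π.take i) = some qi := by
    intro i _
    have : pathδ A.δ A.root (π.take i ++ π.drop i) = some q := by
      rw [List.take_append_drop]; exact hq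
    rw [pathδ_append] at this
    obtain ⟨qi, hqi, -⟩ := Option.bind_eq_some_iff.mp this
    exact ⟨qi, hqi⟩
  have key : ∀ i j, i < j → j ≤ π.length →
      (pathδ A.δ A.root (π.take i)).getD A.root = (pathδ A.δ A.root (π.take j)).getD A.root →
      False := by
    intro i j hij hj heq
    obtain ⟨qi, hqi⟩ := hpre i (le_trans hij.le hj)
    obtain ⟨qj, hqj⟩ := hpre j hj
    rw [hqi, hqj] at heq
    simp only [Option.getD_some] at heq
    subst heq
    have htake : π.take j = π.take i ++ (π.drop i).take (j - i) := by
      conv_lhs => rw [show j = i + (j - i) by omega]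
      rw [List.take_add]
    rw [htake, pathδ_append, hqi] at hqj
    rw [Option.bind_some] at hqj
    apply hA
    refine ⟨qi, A.mem_of_pathδ A.root_mem hqi, (π.drop i).take (j - i), ?_, hqj⟩
    intro hnil
    have hlen0 : ((π.drop i).take (j - i)).length = 0 := by rw [hnil]; rfl
    rw [List.length_take, List.length_drop] at hlen0
    omega
  obtain ⟨i, hi, j, hj, hij, heq⟩ :=
    Finset.exists_ne_map_eq_of_card_lt_of_maps_to
      (s := Finset.range (π.length + 1)) (t := A.Q)
      (by rw [Finset.card_range]; omega)
      (f := fun i => (pathδ A.δ A.root (π.take i)).getD A.root)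
      (by intro i hi
          simp only [Finset.coe_range, Set.mem_Iio] at hi
          obtain ⟨qi, hqi⟩ := hpre i (by omega)
          show (pathδ A.δ A.root (π.take i)).getD A.root ∈ A.Q
          rw [hqi, Option.getD_some]
          exact A.mem_of_pathδ A.root_mem hqi)
  simp only [Finset.mem_range] at hi hj
  rcases hij.lt_or_gt with hlt | hlt
  · exact key i j hlt (by omega) heq
  · exact key j i hlt (by omega) heq.symm

lemma card_add_card_image_le {α β : Type*} [DecidableEq α] [DecidableEq β]
    {s t : Finset α} (hst : s ⊆ t) (f : α → β) :
    s.card + (t.image f).card ≤ t.card + (s.image f).card := by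
  have h1 : t.image f = s.image f ∪ (t \ s).image f := by
    rw [← Finset.image_union, Finset.union_sdiff_of_subset hst]
  have h2 := Finset.card_union_le (s.image f) ((t \ s).image f)
  have h3 := Finset.card_image_le (s := t \ s) (f := f)
  have h4 := Finset.card_sdiff_of_subset hst
  have h5 := Finset.card_le_card hst
  rw [h1]
  omega

end Aux

/-- If `A` and `B` are acyclic and `A ⊏ B`, then `rank(A) < rank(B)`. -/

theorem rank_strict_mono [Finite Feats] [PartialOrder Types]
    (r : Types → ℕ) (hr : ∀ t t' : Types, t < t' → r t < r t')
    (θ : Nodes → Types) (A B : TFS Nodes Feats)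
    (hA : A.Acyclic) (hB : B.Acyclic) (hs : StrictlySubsumes θ A B) :
    rank r θ A < rank r θ B := by
  classical
  obtain ⟨hsub, hnsub⟩ := hs
  obtain ⟨h, hm⟩ := hsub
  have hAfin := A.pi_finite hA
  have hBfin := B.pi_finite hB
  set SA := hAfin.toFinset with hSA
  set SB := hBfin.toFinset with hSB
  have hABpath : ∀ {π : List Feats} {qa : Nodes}, pathδ A.δ A.root π = some qa →
      pathδ B.δ B.root π = some (h qa) := by
    intro π qa hp
    have := pathδ_morphism hm hp
    rwa [hm.1] at this
  have hmemA : ∀ {π : List Feats}, π ∈ SA ↔ ∃ qa, pathδ A.δ A.root π = some qa := by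
    intro π
    rw [hSA, Set.Finite.mem_toFinset]
    simp [TFS.Pi, Option.isSome_iff_exists]
  have hmemB : ∀ {π : List Feats}, π ∈ SB ↔ ∃ qb, pathδ B.δ B.root π = some qb := by
    intro π
    rw [hSB, Set.Finite.mem_toFinset]
    simp [TFS.Pi, Option.isSome_iff_exists]
  have hsubset : SA ⊆ SB := by
    intro π hπ
    obtain ⟨qa, hqa⟩ := hmemA.mp hπ
    exact hmemB.mpr ⟨h qa, hABpath hqa⟩
  set nA : List Feats → Nodes := fun π => (pathδ A.δ A.root π).getD A.root with hnA
  set nB : List Feats → Nodes := fun π => (pathδ B.δ B.root π).getD B.root with hnB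
  have hQA : A.Q = SA.image nA := by
    ext q
    constructor
    · intro hq
      obtain ⟨π, hπ⟩ := A.reach q hq
      exact Finset.mem_image.mpr ⟨π, hmemA.mpr ⟨q, hπ⟩, by simp [hnA, hπ]⟩
    · intro hq
      obtain ⟨π, hπ, hval⟩ := Finset.mem_image.mp hq
      obtain ⟨qa, hqa⟩ := hmemA.mp hπ
      have : nA π = qa := by simp [hnA, hqa]
      rw [← hval, this]
      exact A.mem_of_pathδ A.root_mem hqa
  have hQB : B.Q = SB.image nB := by
    ext q
    constructor
    · intro hq
      obtain ⟨π, hπ⟩ := B.reach q hq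
      exact Finset.mem_image.mpr ⟨π, hmemB.mpr ⟨q, hπ⟩, by simp [hnB, hπ]⟩
    · intro hq
      obtain ⟨π, hπ, hval⟩ := Finset.mem_image.mp hq
      obtain ⟨qb, hqb⟩ := hmemB.mp hπ
      have : nB π = qb := by simp [hnB, hqb]
      rw [← hval, this]
      exact B.mem_of_pathδ B.root_mem hqb
  have himageAB : SA.image nB = (SA.image nA).image h := by
    rw [Finset.image_image]
    apply Finset.image_congr
    intro π hπ
    obtain ⟨qa, hqa⟩ := hmemA.mp hπ
    simp [hnA, hnB, hqa, hABpath hqa]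
  have hcardX : SA.card ≤ SB.card := Finset.card_le_card hsubset
  have hΔ : SA.card + B.Q.card ≤ SB.card + A.Q.card := by
    have h1 := card_add_card_image_le hsubset nB
    have h2 : (SA.image nB).card ≤ A.Q.card := by
      calc (SA.image nB).card = ((SA.image nA).image h).card := by rw [himageAB]
        _ ≤ (SA.image nA).card := Finset.card_image_le
        _ = A.Q.card := by rw [← hQA]
    have h3 : B.Q.card = (SB.image nB).card := by rw [hQB]
    omega
  set fA : List Feats → ℕ := fun π => (pathδ A.δ A.root π).elim 0 fun q => r (θ q) with hfA
  set fB : List Feats → ℕ := fun π => (pathδ B.δ B.root π).elim 0 fun q => r (θ q) with hfB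
  have hThA : Theta r θ A = ∑ π ∈ SA, fA π := by
    rw [Theta]; exact finsum_mem_eq_finite_toFinset_sum _ hAfin
  have hThB : Theta r θ B = ∑ π ∈ SB, fB π := by
    rw [Theta]; exact finsum_mem_eq_finite_toFinset_sum _ hBfin
  have hrle : ∀ t t' : Types, t ≤ t' → r t ≤ r t' := fun t t' ht =>
    ht.lt_or_eq.elim (fun hlt => (hr _ _ hlt).le) (fun he => he ▸ le_rfl)
  have hpt : ∀ π ∈ SA, fA π ≤ fB π := by
    intro π hπ
    obtain ⟨qa, hqa⟩ := hmemA.mp hπ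
    have e1 : fA π = r (θ qa) := by simp [hfA, hqa]
    have e2 : fB π = r (θ (h qa)) := by simp [hfB, hABpath hqa]
    rw [e1, e2]
    exact hrle _ _ (hm.2.2.1 qa (A.mem_of_pathδ A.root_mem hqa))
  have hΘ : Theta r θ A ≤ Theta r θ B := by
    rw [hThA, hThB]
    calc ∑ π ∈ SA, fA π ≤ ∑ π ∈ SA, fB π := Finset.sum_le_sum hpt
      _ ≤ ∑ π ∈ SB, fB π := Finset.sum_le_sum_of_subset hsubset
  have hncA : A.Pi.ncard = SA.card := Set.ncard_eq_toFinset_card _ hAfin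
  have hncB : B.Pi.ncard = SB.card := Set.ncard_eq_toFinset_card _ hBfin
  by_contra hcon
  push_neg at hcon
  rw [rank, rank, hncA, hncB] at hcon
  have e1 : SA.card = SB.card := by omega
  have e2 : Theta r θ A = Theta r θ B := by omega
  have e3 : A.Q.card = B.Q.card := by omega
  have eS : SA = SB := Finset.eq_of_subset_of_card_le hsubset e1.ge
  have hpteq : ∀ π ∈ SA, fA π = fB π := by
    rw [hThA, hThB, ← eS] at e2
    exact (Finset.sum_eq_sum_iff_of_le hpt).mp e2
  have hθeq : ∀ {π : List Feats} {qa : Nodes}, pathδ A.δ A.root π = some qa →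
      θ (h qa) = θ qa := by
    intro π qa hqa
    have hπ : π ∈ SA := hmemA.mpr ⟨qa, hqa⟩
    have heq := hpteq π hπ
    have e1' : fA π = r (θ qa) := by simp [hfA, hqa]
    have e2' : fB π = r (θ (h qa)) := by simp [hfB, hABpath hqa]
    rw [e1', e2'] at heq
    have hle := hm.2.2.1 qa (A.mem_of_pathδ A.root_mem hqa)
    rcases hle.lt_or_eq with hlt | he
    · exact absurd (heq ▸ hr _ _ hlt) (lt_irrefl _)
    · exact he.symm
  have hinj : Set.InjOn h ↑A.Q := by
    have hc : ((SA.image nA).image h).card = (SA.image nA).card := by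
      calc ((SA.image nA).image h).card = (SA.image nB).card := by rw [himageAB]
        _ = (SB.image nB).card := by rw [eS]
        _ = B.Q.card := by rw [← hQB]
        _ = A.Q.card := e3.symm
        _ = (SA.image nA).card := by rw [hQA]
    have := Finset.injOn_of_card_image_eq hc
    rwa [hQA]
  have hBtoA : ∀ {π : List Feats} {q : Nodes}, pathδ B.δ B.root π = some q →
      ∃ qa, pathδ A.δ A.root π = some qa := by
    intro π q hq
    have hπ : π ∈ SA := eS ▸ hmemB.mpr ⟨q, hq⟩
    exact hmemA.mp hπ
  set g : Nodes → Nodes := fun q =>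
    if hq : ∃ qa, ∃ π, pathδ B.δ B.root π = some q ∧ pathδ A.δ A.root π = some qa
    then hq.choose else q with hgdef
  have hgspec : ∀ {π : List Feats} {q qa : Nodes}, pathδ B.δ B.root π = some q →
      pathδ A.δ A.root π = some qa → g q = qa := by
    intro π q qa hBp hAp
    have hex : ∃ qa, ∃ π, pathδ B.δ B.root π = some q ∧ pathδ A.δ A.root π = some qa :=
      ⟨qa, π, hBp, hAp⟩
    rw [hgdef]
    simp only [dif_pos hex]
    obtain ⟨π', hB', hA'⟩ := hex.choose_spec
    have h1 : h hex.choose = q := by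
      have := hABpath hA'
      rw [hB'] at this
      exact (Option.some_injective _ this).symm
    have h2 : h qa = q := by
      have := hABpath hAp
      rw [hBp] at this
      exact (Option.some_injective _ this).symm
    exact hinj (A.mem_of_pathδ A.root_mem hA') (A.mem_of_pathδ A.root_mem hAp)
      (h1.trans h2.symm)
  apply hnsub
  refine ⟨g, ?_, ?_, ?_, ?_⟩
  · exact hgspec (show pathδ B.δ B.root [] = some B.root from rfl) rfl
  · intro q hq
    obtain ⟨π, hπ⟩ := B.reach q hq
    obtain ⟨qa, hqa⟩ := hBtoA hπ
    rw [hgspec hπ hqa]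
    exact A.mem_of_pathδ A.root_mem hqa
  · intro q hq
    obtain ⟨π, hπ⟩ := B.reach q hq
    obtain ⟨qa, hqa⟩ := hBtoA hπ
    rw [hgspec hπ hqa]
    have h2 : h qa = q := by
      have := hABpath hqa
      rw [hπ] at this
      exact (Option.some_injective _ this).symm
    rw [← h2, hθeq hqa]
  · intro q f q' hδ'
    have hqQ : q ∈ B.Q := B.dom q f (by rw [hδ']; rfl)
    obtain ⟨π, hπ⟩ := B.reach q hqQ
    have hπ' : pathδ B.δ B.root (π ++ [f]) = some q' := by
      rw [pathδ_append, hπ]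
      simp [pathδ, hδ']
    obtain ⟨qa, hqa⟩ := hBtoA hπ
    obtain ⟨qa', hqa'⟩ := hBtoA hπ'
    have hstep : A.δ qa f = some qa' := by
      have hh := hqa'
      rw [pathδ_append, hqa] at hh
      simpa [pathδ] using hh
    rw [hgspec hπ hqa, hgspec hπ' hqa']
    exact hstep
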